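/- Let $R$ be the free associative algebra over $\mathbb{F}_2$, and let $s, t, \mu_1, \mu_2, \mu_3, \tau_2 \in R$ satisfy $t\mu_2 = \tau_2 s$. Define $u_1 = \mu_1(s+1)$, $v_1 = \mu_1 s$, $u_2 = \tau_2(s+1)$, $v_2 = (t+1)\mu_2$, $u_3 = t\mu_3$, $v_3 = (t+1)\mu_3$. Then every $x \in R$ with $sx = xt$ satisfies $u_1 x u_2 x u_3 = v_1 x v_2 x v_3$. -/
import Mathlib


/-- (Easy direction of Proposition 4.11.) With coefficients of the special form built from
`s, t, μᵢ, τ₂` with `tμ₂ = τ₂s`, every solution of `sx = xt` solves `u₁xu₂xu₃ = v₁xv₂xv₃`. -/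
theorem solution_of_linear_solves_quadratic {σ : Type*}
    (s t μ₁ μ₂ μ₃ τ₂ u₁ v₁ u₂ v₂ u₃ v₃ x : FreeAlgebra (ZMod 2) σ)
    (hrel : t * μ₂ = τ₂ * s)
    (hu₁ : u₁ = μ₁ * (s + 1)) (hv₁ : v₁ = μ₁ * s)
    (hu₂ : u₂ = τ₂ * (s + 1)) (hv₂ : v₂ = (t + 1) * μ₂)
    (hu₃ : u₃ = t * μ₃) (hv₃ : v₃ = (t + 1) * μ₃)
    (hx : s * x = x * t) :
    u₁ * x * u₂ * x * u₃ = v₁ * x * v₂ * x * v₃ := by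
  subst hu₁ hv₁ hu₂ hv₂ hu₃ hv₃
  have h1 : (s + 1) * x = x * (t + 1) := by
    rw [add_mul, mul_add, hx, one_mul, mul_one]
  have h2 : x * ((t + 1) * t) = s * (s + 1) * x := by
    have h2' : x * (t * t) = s * (s * x) := by
      rw [← mul_assoc, ← hx, mul_assoc, hx, ← mul_assoc]
    rw [add_mul, one_mul, mul_add, h2', ← hx]; noncomm_ring
  calc μ₁ * (s + 1) * x * (τ₂ * (s + 1)) * x * (t * μ₃)
      = μ₁ * ((s + 1) * x) * τ₂ * ((s + 1) * x) * (t * μ₃) := by noncomm_ring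
    _ = μ₁ * (x * (t + 1)) * τ₂ * (x * (t + 1)) * (t * μ₃) := by rw [h1]
    _ = μ₁ * (x * (t + 1)) * τ₂ * (x * ((t + 1) * t)) * μ₃ := by noncomm_ring
    _ = μ₁ * (x * (t + 1)) * τ₂ * (s * (s + 1) * x) * μ₃ := by rw [h2]
    _ = μ₁ * x * (t + 1) * (τ₂ * s) * ((s + 1) * x) * μ₃ := by noncomm_ring
    _ = μ₁ * x * (t + 1) * (t * μ₂) * (x * (t + 1)) * μ₃ := by rw [← hrel, h1]
    _ = μ₁ * x * ((t + 1) * t) * μ₂ * x * ((t + 1) * μ₃) := by noncomm_ring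
    _ = μ₁ * x * (t * (t + 1)) * μ₂ * x * ((t + 1) * μ₃) := by noncomm_ring
    _ = μ₁ * (x * t) * (t + 1) * μ₂ * x * ((t + 1) * μ₃) := by noncomm_ring
    _ = μ₁ * (s * x) * (t + 1) * μ₂ * x * ((t + 1) * μ₃) := by rw [hx]
    _ = μ₁ * s * x * ((t + 1) * μ₂) * x * ((t + 1) * μ₃) := by noncomm_ring
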